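/- Consider the entire function f(z) = z·exp(z). Then f has no asymptotic value in ℂ \ {0}: there is no continuous path γ : [0,1) → ℂ with |γ(t)| → ∞ as t → 1 such that f(γ(t)) converges to some a ∈ ℂ with a ≠ 0. -/

import Mathlib

open Filter Set Topology

private lemma freq_cross (y : ℝ → ℝ) (t₀ : ℝ) (ht₀ : t₀ < 1)
    (hy : ContinuousOn y (Set.Ioo t₀ 1))
    (s : ℝ) (hs1 : s = 1 ∨ s = -1)
    (hs : ∀ t ∈ Set.Ioo t₀ 1, y t = s * |y t|)
    (hb : Filter.Tendsto (fun t => |y t|) (nhdsWithin 1 (Set.Iio 1)) Filter.atTop)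
    (d : ℝ) :
    ∃ᶠ t in nhdsWithin 1 (Set.Iio 1),
      t ∈ Set.Ioo t₀ 1 ∧ ∃ k : ℤ, y t = d + 2 * Real.pi * k := by
  rw [Filter.frequently_iff]
  intro U hU
  obtain ⟨u₀, hu₀, hsub⟩ := mem_nhdsLT_iff_exists_Ioo_subset.mp hU
  set u : ℝ := max u₀ t₀ with hu
  have hu1 : u < 1 := max_lt hu₀ ht₀
  set u₁ : ℝ := (u + 1) / 2 with hu₁def
  have hu₁ : u₁ ∈ Set.Ioo u 1 := ⟨by simp only [hu₁def]; linarith, by simp only [hu₁def]; linarith⟩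
  have hu₁t₀ : u₁ ∈ Set.Ioo t₀ 1 := ⟨lt_of_le_of_lt (le_max_right _ _) hu₁.1, hu₁.2⟩
  -- pick t₂ ∈ Ioo u₁ 1 with |y t₂| large
  have hmem : {t | |y t| ≥ |y u₁| + 2 * Real.pi + |d| + 1} ∩ Set.Ioo u₁ 1 ∈
      nhdsWithin 1 (Set.Iio 1) :=
    Filter.inter_mem (hb.eventually (Filter.eventually_ge_atTop _))
      (Ioo_mem_nhdsLT_of_mem ⟨hu₁.2, le_refl _⟩)
  obtain ⟨t₂, ht₂big, ht₂mem⟩ := Filter.nonempty_of_mem hmem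
  have ht₂t₀ : t₂ ∈ Set.Ioo t₀ 1 := ⟨lt_trans hu₁t₀.1 ht₂mem.1, ht₂mem.2⟩
  have hpi : (0:ℝ) < Real.pi := Real.pi_pos
  have hbig : |y t₂| ≥ |y u₁| + 2 * Real.pi + |d| + 1 := ht₂big
  set m : ℝ := min (y u₁) (y t₂) with hm
  set M : ℝ := max (y u₁) (y t₂) with hM
  have hmM : M - m ≥ 2 * Real.pi := by
    have h1 := hs u₁ hu₁t₀
    have h2 := hs t₂ ht₂t₀
    have hd := abs_nonneg d
    rcases hs1 with h | h <;> subst h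
    · rw [one_mul] at h1 h2
      rw [hM, hm, max_eq_right (by linarith [abs_nonneg (y u₁)] : y u₁ ≤ y t₂),
          min_eq_left (by linarith [abs_nonneg (y u₁)] : y u₁ ≤ y t₂)]
      linarith
    · rw [neg_one_mul] at h1 h2
      rw [hM, hm, max_eq_left (by linarith [abs_nonneg (y u₁)] : y t₂ ≤ y u₁),
        min_eq_right (by linarith [abs_nonneg (y u₁)] : y t₂ ≤ y u₁)]
      linarith
  set k : ℤ := ⌈(m - d) / (2 * Real.pi)⌉ with hk
  set v : ℝ := d + 2 * Real.pi * k with hv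
  have hvm : m ≤ v := by
    have := Int.le_ceil ((m - d) / (2 * Real.pi))
    have h2 : m - d ≤ 2 * Real.pi * k := by
      rw [hk]
      calc m - d = ((m - d) / (2 * Real.pi)) * (2 * Real.pi) := by field_simp
        _ ≤ (⌈(m - d) / (2 * Real.pi)⌉ : ℝ) * (2 * Real.pi) := by
            apply mul_le_mul_of_nonneg_right this (by linarith)
        _ = 2 * Real.pi * ⌈(m - d) / (2 * Real.pi)⌉ := by ring
    linarith [h2]
  have hvM : v ≤ M := by
    have := Int.ceil_lt_add_one ((m - d) / (2 * Real.pi))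
    have h2 : 2 * Real.pi * k < m - d + 2 * Real.pi := by
      rw [hk]
      calc 2 * Real.pi * (⌈(m - d) / (2 * Real.pi)⌉ : ℝ)
          < 2 * Real.pi * ((m - d) / (2 * Real.pi) + 1) := by
            apply mul_lt_mul_of_pos_left this (by linarith)
        _ = m - d + 2 * Real.pi := by field_simp
    linarith
  -- IVT
  have hsubI : Set.uIcc u₁ t₂ ⊆ Set.Ioo t₀ 1 := by
    exact Set.OrdConnected.uIcc_subset Set.ordConnected_Ioo hu₁t₀ ht₂t₀
  have hcont : ContinuousOn y (Set.uIcc u₁ t₂) := hy.mono hsubI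
  have hval : v ∈ Set.uIcc (y u₁) (y t₂) := by
    rw [Set.uIcc_eq_union]
    rcases le_total (y u₁) (y t₂) with h | h
    · left; rw [hm, min_eq_left h] at hvm; rw [hM, max_eq_right h] at hvM
      exact ⟨hvm, hvM⟩
    · right; rw [hm, min_eq_right h] at hvm; rw [hM, max_eq_left h] at hvM
      exact ⟨hvm, hvM⟩
  obtain ⟨t, htmem, htval⟩ := intermediate_value_uIcc hcont hval
  have htI : t ∈ Set.Ioo t₀ 1 := hsubI htmem
  have htU : t ∈ U := by
    apply hsub
    constructor
    · have : t ∈ Set.Icc (min u₁ t₂) (max u₁ t₂) := by rwa [Set.uIcc] at htmem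
      have h1 : u < min u₁ t₂ := lt_min hu₁.1 (lt_trans hu₁.1 ht₂mem.1)
      exact lt_of_lt_of_le (lt_of_le_of_lt (le_max_left u₀ t₀) h1) this.1
    · exact htI.2
  exact ⟨t, htU, htI, k, htval.trans hv⟩

theorem stmt_18 :
    ¬ ∃ (a : ℂ) (γ : ℝ → ℂ), a ≠ 0 ∧
      ContinuousOn γ (Set.Ico 0 1) ∧
      Filter.Tendsto (fun t => ‖γ t‖) (nhdsWithin 1 (Set.Ico 0 1))
        Filter.atTop ∧
      Filter.Tendsto (fun t => γ t * Complex.exp (γ t)) (nhdsWithin 1 (Set.Ico 0 1))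
        (nhds a) := by
  rintro ⟨a, γ, ha, hcont, habs, hconv⟩
  -- the filter is 𝓝[<] 1
  have hLL : nhdsWithin (1:ℝ) (Set.Ico 0 1) = nhdsWithin (1:ℝ) (Set.Iio 1) := by
    apply nhdsWithin_eq_nhdsWithin' (Ioo_mem_nhds (by norm_num : (0:ℝ) < 1) (by norm_num : (1:ℝ) < 2))
    ext t
    simp only [Set.mem_inter_iff, Set.mem_Ico, Set.mem_Ioo, Set.mem_Iio]
    constructor
    · rintro ⟨⟨h1, h2⟩, h3, h4⟩; exact ⟨h2, h3, h4⟩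
    · rintro ⟨h1, h2, h3⟩; exact ⟨⟨le_of_lt h2, h1⟩, h2, h3⟩
  rw [hLL] at habs hconv
  set L := nhdsWithin (1:ℝ) (Set.Iio 1) with hLdef
  set x : ℝ → ℝ := fun t => (γ t).re with hxdef
  set y : ℝ → ℝ := fun t => (γ t).im with hydef
  set r : ℝ → ℝ := fun t => ‖γ t‖ with hrdef
  set f : ℝ → ℂ := fun t => γ t * Complex.exp (γ t) with hfdef
  have hr : Filter.Tendsto r L Filter.atTop := habs
  have hrpos : ∀ᶠ t in L, 0 < r t := hr.eventually (Filter.eventually_gt_atTop 0)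
  have habsf : Filter.Tendsto (fun t => ‖f t‖) L (nhds (‖a‖)) :=
    (continuous_norm.tendsto a).comp hconv
  have hfabs : ∀ t, ‖f t‖ = r t * Real.exp (x t) := by
    intro t
    simp [hfdef, hrdef, hxdef, norm_mul, Complex.norm_exp]
  -- exp (x t) → 0
  have hx0 : Filter.Tendsto (fun t => Real.exp (x t)) L (nhds 0) := by
    apply Filter.Tendsto.congr' _ (habsf.div_atTop hr)
    filter_upwards [hrpos] with t ht
    rw [hfabs t, mul_comm, mul_div_assoc, div_self (ne_of_gt ht), mul_one]
  -- x/r → 0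
  have hlog1 : Filter.Tendsto (fun t => Real.log (‖f t‖)) L
      (nhds (Real.log (‖a‖))) :=
    (Real.continuousAt_log (by simpa using ha)).tendsto.comp habsf
  have hlogr : Filter.Tendsto (fun t => Real.log (r t) / r t) L (nhds 0) :=
    (Real.isLittleO_log_id_atTop.tendsto_div_nhds_zero).comp hr
  have hxr : Filter.Tendsto (fun t => x t / r t) L (nhds 0) := by
    have h1 : Filter.Tendsto (fun t => Real.log (‖f t‖) / r t - Real.log (r t) / r t)
        L (nhds 0) := by
      have := (hlog1.div_atTop hr).sub hlogr
      simpa using this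
    apply Filter.Tendsto.congr' _ h1
    filter_upwards [hrpos] with t ht
    rw [hfabs t, Real.log_mul (ne_of_gt ht) (Real.exp_ne_zero _), Real.log_exp]
    ring
  -- |y|/r → 1
  have hsq : ∀ t, 0 < r t → (x t / r t)^2 + (y t / r t)^2 = 1 := by
    intro t ht
    have h1 : (x t)^2 + (y t)^2 = (r t)^2 := by
      rw [hrdef]
      simp only [Complex.sq_norm, Complex.normSq_apply, hxdef, hydef]
      ring
    field_simp
    linarith
  have hyr1 : Filter.Tendsto (fun t => |y t| / r t) L (nhds 1) := by
    have h1 : Filter.Tendsto (fun t => Real.sqrt (1 - (x t / r t)^2)) L (nhds 1) := by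
      have h2 : Filter.Tendsto (fun t => 1 - (x t / r t)^2) L (nhds 1) := by
        have := ((hxr.pow 2).const_sub 1)
        simpa using this
      have := (Real.continuous_sqrt.tendsto 1).comp h2
      simpa [Function.comp_def] using this
    apply Filter.Tendsto.congr' _ h1
    filter_upwards [hrpos] with t ht
    have h3 : 1 - (x t / r t)^2 = (y t / r t)^2 := by
      have := hsq t ht; linarith
    rw [h3, Real.sqrt_sq_eq_abs, abs_div, abs_of_pos ht]
  have hyabs : Filter.Tendsto (fun t => |y t|) L Filter.atTop := by
    have h1 : Filter.Tendsto (fun t => r t * (|y t| / r t)) L Filter.atTop :=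
      hr.atTop_mul_pos one_pos hyr1
    apply Filter.Tendsto.congr' _ h1
    filter_upwards [hrpos] with t ht
    rw [mul_comm, div_mul_cancel₀ _ (ne_of_gt ht)]
  -- eventual sign
  obtain ⟨t₀', ht₀', hsub'⟩ := mem_nhdsLT_iff_exists_Ioo_subset.mp
    (hyabs.eventually (Filter.eventually_ge_atTop 1))
  set t₀ : ℝ := max t₀' 0 with ht₀def
  have ht₀1 : t₀ < 1 := max_lt ht₀' one_pos
  have ht₀0 : 0 ≤ t₀ := le_max_right _ _
  have hsubI : Set.Ioo t₀ 1 ⊆ Set.Ioo t₀' 1 :=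
    Set.Ioo_subset_Ioo (le_max_left _ _) (le_refl _)
  have hyge : ∀ t ∈ Set.Ioo t₀ 1, 1 ≤ |y t| := fun t ht => hsub' (hsubI ht)
  have hIsub : Set.Ioo t₀ 1 ⊆ Set.Ico 0 1 := fun t ht =>
    ⟨le_trans ht₀0 (le_of_lt ht.1), ht.2⟩
  have hycont : ContinuousOn y (Set.Ioo t₀ 1) :=
    Complex.continuous_im.comp_continuousOn (hcont.mono hIsub)
  set t₁ : ℝ := (t₀ + 1) / 2 with ht₁def
  have ht₁ : t₁ ∈ Set.Ioo t₀ 1 := ⟨by rw [ht₁def]; linarith, by rw [ht₁def]; linarith⟩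
  set s : ℝ := if 0 < y t₁ then 1 else -1 with hsdef
  have hs1 : s = 1 ∨ s = -1 := by
    rw [hsdef]; split <;> simp
  have hsign : ∀ t ∈ Set.Ioo t₀ 1, y t = s * |y t| := by
    intro t ht
    have hpos : (0 < y t) ↔ (0 < y t₁) := by
      constructor <;> intro h <;> by_contra hc <;> push_neg at hc
      · -- y t > 0, y t₁ ≤ 0
        have hu : Set.uIcc t t₁ ⊆ Set.Ioo t₀ 1 :=
          Set.OrdConnected.uIcc_subset Set.ordConnected_Ioo ht ht₁
        have h0 : (0:ℝ) ∈ Set.uIcc (y t) (y t₁) := by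
          rw [Set.mem_uIcc]; right; exact ⟨hc, le_of_lt h⟩
        obtain ⟨t₂, ht₂, ht₂v⟩ := intermediate_value_uIcc (hycont.mono hu) h0
        have := hyge t₂ (hu ht₂)
        rw [ht₂v] at this; norm_num at this
      · have hu : Set.uIcc t t₁ ⊆ Set.Ioo t₀ 1 :=
          Set.OrdConnected.uIcc_subset Set.ordConnected_Ioo ht ht₁
        have h0 : (0:ℝ) ∈ Set.uIcc (y t) (y t₁) := by
          rw [Set.mem_uIcc]; left; exact ⟨hc, le_of_lt h⟩
        obtain ⟨t₂, ht₂, ht₂v⟩ := intermediate_value_uIcc (hycont.mono hu) h0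
        have := hyge t₂ (hu ht₂)
        rw [ht₂v] at this; norm_num at this
    have hne : y t ≠ 0 := by
      intro h; have := hyge t ht; rw [h] at this; norm_num at this
    rw [hsdef]
    split
    · next hy1 => rw [one_mul, abs_of_pos (hpos.mpr hy1)]
    · next hy1 =>
      rw [neg_one_mul, abs_of_neg]
      · ring
      · rcases lt_or_gt_of_ne hne with h | h
        · exact h
        · exact absurd (hpos.mp h) hy1
  -- y/r → s
  have hIooL : Set.Ioo t₀ 1 ∈ L := Ioo_mem_nhdsLT_of_mem ⟨ht₀1, le_refl _⟩
  have hyrs : Filter.Tendsto (fun t => y t / r t) L (nhds s) := by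
    have h1 : Filter.Tendsto (fun t => s * (|y t| / r t)) L (nhds s) := by
      have := hyr1.const_mul s
      simpa using this
    apply Filter.Tendsto.congr' _ h1
    filter_upwards [hIooL] with t ht
    rw [← mul_div_assoc, ← hsign t ht]
  -- the normalized image converges
  have haC : ((‖a‖ : ℝ) : ℂ) ≠ 0 := by
    simpa using ha
  set c : ℝ := (a / ((‖a‖ : ℝ) : ℂ)).im with hcdef
  have hg : Filter.Tendsto (fun t => f t / ((‖f t‖ : ℝ) : ℂ)) L
      (nhds (a / ((‖a‖ : ℝ) : ℂ))) :=
    hconv.div ((Complex.continuous_ofReal.tendsto _).comp habsf) haC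
  have hgim : Filter.Tendsto (fun t => (f t / ((‖f t‖ : ℝ) : ℂ)).im) L (nhds c) :=
    (Complex.continuous_im.tendsto _).comp hg
  have E1 : ∀ᶠ t in L, |(f t / ((‖f t‖ : ℝ) : ℂ)).im - c| < 1/2 := by
    have := Metric.tendsto_nhds.mp hgim (1/2) (by norm_num)
    filter_upwards [this] with t ht
    rwa [Real.dist_eq] at ht
  have E2 : ∀ᶠ t in L, |y t / r t - s| < 1/2 := by
    have := Metric.tendsto_nhds.mp hyrs (1/2) (by norm_num)
    filter_upwards [this] with t ht
    rwa [Real.dist_eq] at ht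
  -- key computation of the imaginary part at crossing times
  have hkey : ∀ (ε : ℝ), ∀ t : ℝ, 0 < r t →
      Complex.exp (((y t : ℝ) : ℂ) * Complex.I) = ((ε : ℝ) : ℂ) →
      (f t / ((‖f t‖ : ℝ) : ℂ)).im = ε * (y t / r t) := by
    intro ε t ht hexp
    simp only [hfdef, hrdef, hxdef, hydef] at hexp ht ⊢
    have hexpγ : Complex.exp (γ t) = ((Real.exp ((γ t).re) : ℝ) : ℂ) * ((ε : ℝ) : ℂ) := by
      conv_lhs => rw [← Complex.re_add_im (γ t)]
      rw [Complex.exp_add, hexp, Complex.ofReal_exp]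
    have habsft : ‖γ t * Complex.exp (γ t)‖
        = ‖γ t‖ * Real.exp ((γ t).re) := by
      rw [norm_mul, Complex.norm_exp]
    rw [habsft, hexpγ, ← Complex.ofReal_mul, Complex.div_ofReal_im]
    have he : Real.exp ((γ t).re) ≠ 0 := Real.exp_ne_zero _
    have hrne : ‖γ t‖ ≠ 0 := ne_of_gt ht
    simp only [Complex.mul_im, Complex.ofReal_re, Complex.ofReal_im, mul_zero, zero_add]
    field_simp
  -- crossing at multiples of 2π : exp(i y) = 1
  have F0 := freq_cross y t₀ ht₀1 hycont s hs1 hsign hyabs 0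
  have Fpi := freq_cross y t₀ ht₀1 hycont s hs1 hsign hyabs Real.pi
  -- extract a point for d = 0
  obtain ⟨t, ⟨htI, k, hyk⟩, h1, h2, h3⟩ :=
    (F0.and_eventually (E1.and (E2.and hrpos))).exists
  have hexp1 : Complex.exp (((y t : ℝ) : ℂ) * Complex.I) = (((1:ℝ) : ℝ) : ℂ) := by
    rw [hyk]
    have : (((0 + 2 * Real.pi * (k:ℝ)) : ℝ) : ℂ) * Complex.I
        = (k : ℂ) * (2 * (Real.pi : ℂ) * Complex.I) := by push_cast; ring
    rw [this, Complex.exp_int_mul_two_pi_mul_I]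
    norm_num
  have hval1 : |y t / r t - c| < 1/2 := by
    have := hkey 1 t h3 hexp1
    rw [this, one_mul] at h1
    exact h1
  have hsc : |s - c| < 1 := by
    have h4 := abs_sub_le s (y t / r t) c
    rw [abs_sub_comm s (y t / r t)] at h4
    linarith
  -- extract a point for d = π
  obtain ⟨t', ⟨htI', k', hyk'⟩, h1', h2', h3'⟩ :=
    (Fpi.and_eventually (E1.and (E2.and hrpos))).exists
  have hexp2 : Complex.exp (((y t' : ℝ) : ℂ) * Complex.I) = (((-1:ℝ) : ℝ) : ℂ) := by
    rw [hyk']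
    have : (((Real.pi + 2 * Real.pi * (k':ℝ)) : ℝ) : ℂ) * Complex.I
        = (Real.pi : ℂ) * Complex.I + (k' : ℂ) * (2 * (Real.pi : ℂ) * Complex.I) := by
      push_cast; ring
    rw [this, Complex.exp_add, Complex.exp_pi_mul_I, Complex.exp_int_mul_two_pi_mul_I]
    norm_num
  have hval2 : |(-(y t' / r t')) - c| < 1/2 := by
    have := hkey (-1) t' h3' hexp2
    rw [this] at h1'
    have hh : (-1 : ℝ) * (y t' / r t') = -(y t' / r t') := by ring
    rwa [hh] at h1'
  have hsc2 : |s + c| < 1 := by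
    have h5 : |y t' / r t' + c| < 1/2 := by
      have hneg : -(y t' / r t') - c = -(y t' / r t' + c) := by ring
      rw [hneg, abs_neg] at hval2
      exact hval2
    have h4 := abs_sub_le s (y t' / r t') (-c)
    rw [sub_neg_eq_add, sub_neg_eq_add, abs_sub_comm s (y t' / r t')] at h4
    linarith
  -- contradiction : |2s| = 2 but ≤ |s-c|+|s+c| < 2
  have habs_s : |s| = 1 := by rcases hs1 with h | h <;> rw [h] <;> norm_num
  have : (2:ℝ) = |2 * s| := by rw [abs_mul, habs_s]; norm_num
  have h2s : |2 * s| ≤ |s - c| + |s + c| := by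
    have : 2 * s = (s - c) + (s + c) := by ring
    rw [this]
    exact abs_add_le _ _
  linarith
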